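/- Let (R,μ) be a non-atomic σ-finite measure space with μ(R) = ∞, let A be any Young function, and let p,q ∈ (0,∞]. Then the almost-compact embedding L^A ↪* L^{p,q} does not hold. -/

import Mathlib

open MeasureTheory Filter Set ENNReal

noncomputable section

/-- A Young function: a convex, non-decreasing, left-continuous function
`A : [0,∞] → [0,∞]` with `A(0) = 0`, `A(0+) = 0` and `A(∞) = ∞`. -/
structure YoungFunction where
  toFun : ℝ≥0∞ → ℝ≥0∞
  map_zero : toFun 0 = 0
  tendsto_zero : Filter.Tendsto toFun (nhdsWithin 0 (Set.Ioi 0)) (nhds 0)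
  mono : Monotone toFun
  convex' : ∀ s t c : ℝ≥0∞, c ≤ 1 →
    toFun (c * s + (1 - c) * t) ≤ c * toFun s + (1 - c) * toFun t
  left_continuous : ∀ t : ℝ≥0∞, 0 < t → toFun t = ⨆ s ∈ Set.Iio t, toFun s
  map_top : toFun ⊤ = ⊤

/-- Left-continuous inverse of a non-decreasing function `F : [0,∞] → [0,∞]`:
`F⁻¹(t) = inf {τ ≥ 0 : F(τ) ≥ t}`. -/
def leftInvE (F : ℝ≥0∞ → ℝ≥0∞) (t : ℝ≥0∞) : ℝ≥0∞ :=
  sInf {τ : ℝ≥0∞ | t ≤ F τ}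

/-- `a` is the right-continuous derivative of the Young function `A`:
`a` is non-decreasing, right-continuous, `a(∞) = ∞`, and
`A(t) = ∫₀ᵗ a(s) ds` for all finite `t ≥ 0`. -/
def IsYoungDerivative (A : YoungFunction) (a : ℝ≥0∞ → ℝ≥0∞) : Prop :=
  Monotone a ∧ a ⊤ = ⊤ ∧
    (∀ t : ℝ≥0∞, t ≠ ⊤ → Filter.Tendsto a (nhdsWithin t (Set.Ioi t)) (nhds (a t))) ∧
    ∀ t : ℝ, 0 ≤ t →
      A.toFun (ENNReal.ofReal t) = ∫⁻ s in Set.Ioc (0:ℝ) t, a (ENNReal.ofReal s)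

/-- The Young conjugate `B̃(t) = sup {s·t − B(s) : s ∈ [0,∞]}`. -/
def youngConj (A : YoungFunction) (t : ℝ≥0∞) : ℝ≥0∞ :=
  ⨆ s : ℝ≥0∞, s * t - A.toFun s

variable {R : Type*} [MeasurableSpace R]

/-- The distribution function `f₊(λ) = μ({x : |f(x)| > λ})`. -/
def distFn (μ : Measure R) (f : R → ℝ) (lam : ℝ≥0∞) : ℝ≥0∞ :=
  μ {x | lam < ENNReal.ofReal |f x|}

/-- The non-increasing rearrangement `f*(t) = inf {λ ≥ 0 : f₊(λ) ≤ t}`. -/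
def rearr (μ : Measure R) (f : R → ℝ) (t : ℝ≥0∞) : ℝ≥0∞ :=
  sInf {lam : ℝ≥0∞ | distFn μ f lam ≤ t}

/-- The Lorentz functional `‖f‖_{p,q}` for `p, q ∈ (0,∞]`. -/
def lorentzNorm (μ : Measure R) (p q : ℝ≥0∞) (f : R → ℝ) : ℝ≥0∞ :=
  if q = ⊤ then
    ⨆ t : Set.Ioi (0:ℝ), ENNReal.ofReal t.1 ^ (p⁻¹).toReal * rearr μ f (ENNReal.ofReal t.1)
  else
    (∫⁻ t in Set.Ioi (0:ℝ),
        (ENNReal.ofReal t ^ (p⁻¹).toReal * rearr μ f (ENNReal.ofReal t)) ^ q.toReal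
          / ENNReal.ofReal t) ^ (q⁻¹).toReal

/-- The Luxemburg norm `‖f‖_A = inf {λ > 0 : ∫ A(|f|/λ) dμ ≤ 1}`. -/
def luxNorm (μ : Measure R) (A : YoungFunction) (f : R → ℝ) : ℝ≥0∞ :=
  sInf {lam : ℝ≥0∞ | 0 < lam ∧ ∫⁻ x, A.toFun (ENNReal.ofReal |f x| / lam) ∂μ ≤ 1}

/-- The measure `μ` is non-atomic: every set of positive measure has a subset
of strictly smaller positive measure. -/
def NonAtomic (μ : Measure R) : Prop :=
  ∀ s : Set R, MeasurableSet s → 0 < μ s →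
    ∃ t, t ⊆ s ∧ MeasurableSet t ∧ 0 < μ t ∧ μ t < μ s

/-- The almost-compact embedding `X ↪* Y`, for (quasi)norm functionals `NX`, `NY`:
`X ⊂ Y` and for every sequence of measurable sets `Eₙ` whose characteristic
functions tend to `0` a.e., `sup_{‖f‖_X ≤ 1} ‖f χ_{Eₙ}‖_Y → 0`. -/
def AlmostCompactEmbedding (μ : Measure R) (NX NY : (R → ℝ) → ℝ≥0∞) : Prop :=
  (∀ f : R → ℝ, Measurable f → NX f < ⊤ → NY f < ⊤) ∧
    ∀ E : ℕ → Set R, (∀ n, MeasurableSet (E n)) →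
      (∀ᵐ x ∂μ, Filter.Tendsto (fun n => (E n).indicator (fun _ => (1:ℝ)) x)
        Filter.atTop (nhds 0)) →
      Filter.Tendsto
        (fun n => ⨆ f : {f : R → ℝ // Measurable f ∧ NX f ≤ 1},
          NY ((E n).indicator f.1)) Filter.atTop (nhds 0)

/-- The continuous embedding `X ↪ Y`: there is `C > 0` with `‖f‖_Y ≤ C ‖f‖_X`. -/
def NormEmbedding (μ : Measure R) (NX NY : (R → ℝ) → ℝ≥0∞) : Prop :=
  ∃ C : ℝ, 0 < C ∧ ∀ f : R → ℝ, Measurable f → NY f ≤ ENNReal.ofReal C * NX f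

section Helpers
open Topology

variable {μ : Measure R}


lemma halve {μ : Measure R} (hna : NonAtomic μ) {t : Set R} (ht : MeasurableSet t)
    (h0 : 0 < μ t) (hfin : μ t ≠ ⊤) :
    ∃ u, u ⊆ t ∧ MeasurableSet u ∧ 0 < μ u ∧ 2 * μ u ≤ μ t := by
  obtain ⟨u, hu_sub, hu_meas, hu_pos, hu_lt⟩ := hna t ht h0
  rcases le_or_gt (2 * μ u) (μ t) with h | h
  · exact ⟨u, hu_sub, hu_meas, hu_pos, h⟩
  · refine ⟨t \ u, diff_subset, ht.diff hu_meas, ?_, ?_⟩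
    · have hd : μ (t \ u) = μ t - μ u := measure_diff hu_sub hu_meas.nullMeasurableSet (hu_lt.trans hfin.lt_top).ne
      rw [hd]; exact tsub_pos_of_lt hu_lt
    · have hd : μ (t \ u) = μ t - μ u := measure_diff hu_sub hu_meas.nullMeasurableSet (hu_lt.trans hfin.lt_top).ne
      have h1 : μ (t \ u) ≤ μ u := by
        rw [hd, tsub_le_iff_right]
        rw [two_mul] at h; exact h.le
      calc 2 * μ (t \ u) = μ (t \ u) + μ (t \ u) := two_mul _
        _ ≤ μ (t \ u) + μ u := add_le_add_right h1 _
        _ = (μ t - μ u) + μ u := by rw [hd]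
        _ = μ t := tsub_add_cancel_of_le hu_lt.le

lemma exists_small_subset0 {μ : Measure R} (hna : NonAtomic μ) {s : Set R} (hs : MeasurableSet s)
    (h0 : 0 < μ s) (hfin : μ s ≠ ⊤) {ε : ℝ≥0∞} (hε : 0 < ε) :
    ∃ t, t ⊆ s ∧ MeasurableSet t ∧ 0 < μ t ∧ μ t < ε := by
  have iter : ∀ n : ℕ, ∃ u, u ⊆ s ∧ MeasurableSet u ∧ 0 < μ u ∧ 2 ^ n * μ u ≤ μ s := by
    intro n; induction n with
    | zero => exact ⟨s, subset_rfl, hs, h0, by simp⟩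
    | succ n ih =>
      obtain ⟨u, hu_sub, hu_meas, hu_pos, hu_le⟩ := ih
      have hufin : μ u ≠ ⊤ := by
        intro htop
        rw [htop, ENNReal.mul_top (by positivity)] at hu_le
        exact hfin (top_le_iff.mp hu_le)
      obtain ⟨v, hv_sub, hv_meas, hv_pos, hv_le⟩ := halve hna hu_meas hu_pos hufin
      refine ⟨v, hv_sub.trans hu_sub, hv_meas, hv_pos, ?_⟩
      calc 2 ^ (n+1) * μ v = 2 ^ n * (2 * μ v) := by ring
        _ ≤ 2 ^ n * μ u := by exact mul_le_mul_right hv_le _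
        _ ≤ μ s := hu_le
  rcases eq_or_ne ε ⊤ with rfl | hεt
  · obtain ⟨u, h1, h2, h3, h4⟩ := iter 0
    exact ⟨u, h1, h2, h3, lt_of_le_of_lt (by simpa using h4) hfin.lt_top⟩
  · obtain ⟨n, hn⟩ := ENNReal.exists_nat_gt (ENNReal.div_lt_top hfin hε.ne').ne
    have h2n : μ s / ε < 2 ^ n := lt_of_lt_of_le hn (by exact_mod_cast Nat.cast_le.2 (Nat.lt_two_pow_self (n := n)).le)
    obtain ⟨u, h1, h2, h3, h4⟩ := iter n
    refine ⟨u, h1, h2, h3, ?_⟩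
    have h5 : μ s < 2 ^ n * ε := by
      rwa [ENNReal.div_lt_iff (Or.inl hε.ne') (Or.inl hεt)] at h2n
    have h6 : 2 ^ n * μ u < 2 ^ n * ε := lt_of_le_of_lt h4 h5
    exact lt_of_mul_lt_mul_left h6 (zero_le)

def sierGood (μ : Measure R) (s U t : Set R) : Prop :=
  t ⊆ s \ U ∧ MeasurableSet t ∧ μ t ≤ 1/2

def sierSup (μ : Measure R) (s U : Set R) : ℝ≥0∞ :=
  ⨆ t : {t : Set R // sierGood μ s U t}, μ t.1

open Classical in
def sierNext (μ : Measure R) (s U : Set R) : Set R :=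
  if h : (∃ t, sierGood μ s U t ∧ sierSup μ s U ≤ 2 * μ t) ∧ μ U < 1/2
  then U ∪ h.1.choose else U

def sierSeq (μ : Measure R) (s : Set R) : ℕ → Set R
  | 0 => ∅
  | n + 1 => sierNext μ s (sierSeq μ s n)

lemma sier_exists {μ : Measure R} (hna : NonAtomic μ) {s : Set R} (hs : MeasurableSet s)
    (h1 : 1 ≤ μ s) (hfin : μ s ≠ ⊤) :
    ∃ t, t ⊆ s ∧ MeasurableSet t ∧ 1/2 ≤ μ t ∧ μ t ≤ 1 := by
  set U := sierSeq μ s with hU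
  have hstep : ∀ n, U n ⊆ U (n+1) := by
    intro n
    show U n ⊆ sierNext μ s (U n)
    unfold sierNext
    split
    · exact subset_union_left
    · exact subset_rfl
  have hmono : Monotone U := monotone_nat_of_le_succ hstep
  have inv : ∀ n, MeasurableSet (U n) ∧ U n ⊆ s ∧ μ (U n) ≤ 1 := by
    intro n; induction n with
    | zero => exact ⟨MeasurableSet.empty, empty_subset s, by show μ (sierSeq μ s 0) ≤ 1; simp [sierSeq]⟩
    | succ n ih =>
      obtain ⟨hm, hsub, hle⟩ := ih
      show MeasurableSet (sierNext μ s (U n)) ∧ sierNext μ s (U n) ⊆ s ∧ μ (sierNext μ s (U n)) ≤ 1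
      unfold sierNext
      split
      · rename_i h
        obtain ⟨⟨hgsub, hgmeas, hgle⟩, _⟩ := h.1.choose_spec
        refine ⟨hm.union hgmeas, union_subset hsub (hgsub.trans diff_subset), ?_⟩
        calc μ (U n ∪ h.1.choose) ≤ μ (U n) + μ h.1.choose := measure_union_le _ _
          _ ≤ 1/2 + 1/2 := add_le_add h.2.le hgle
          _ = 1 := ENNReal.add_halves 1
      · exact ⟨hm, hsub, hle⟩
  rcases Classical.em (∃ n, 1/2 ≤ μ (U n)) with ⟨n, hn⟩ | hno
  · exact ⟨U n, (inv n).2.1, (inv n).1, hn, (inv n).2.2⟩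
  push_neg at hno
  exfalso
  -- the union of all steps
  set Uinf := ⋃ n, U n with hUinf
  have hUinf_meas : MeasurableSet Uinf := MeasurableSet.iUnion (fun n => (inv n).1)
  have hUinf_le : μ Uinf ≤ 1/2 := by
    rw [hUinf, hmono.directed_le.measure_iUnion]
    exact iSup_le fun n => (hno n).le
  have hdiff_pos : 0 < μ (s \ Uinf) := by
    have hle2 : μ s ≤ μ (s \ Uinf) + μ Uinf := by
      calc μ s ≤ μ ((s \ Uinf) ∪ Uinf) := measure_mono (by intro x hx; by_cases h : x ∈ Uinf <;> simp [h, hx])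
        _ ≤ μ (s \ Uinf) + μ Uinf := measure_union_le _ _
    by_contra hc
    push_neg at hc
    simp only [le_zero_iff] at hc
    rw [hc, zero_add] at hle2
    exact absurd (h1.trans (hle2.trans hUinf_le)) (by norm_num)
  have hdiff_fin : μ (s \ Uinf) ≠ ⊤ := fun h => hfin (top_le_iff.mp (h ▸ measure_mono diff_subset))
  obtain ⟨t, ht_sub, ht_meas, ht_pos, ht_lt⟩ :=
    exists_small_subset0 hna (hs.diff hUinf_meas) hdiff_pos hdiff_fin
      (show (0:ℝ≥0∞) < 1/2 by norm_num)
  have hcand : ∀ n, sierGood μ s (U n) t :=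
    fun n => ⟨ht_sub.trans (diff_subset_diff_right (subset_iUnion U n)), ht_meas, ht_lt.le⟩
  have hσ : ∀ n, μ t ≤ sierSup μ s (U n) :=
    fun n => le_iSup (fun t' : {t' : Set R // sierGood μ s (U n) t'} => μ t'.1) ⟨t, hcand n⟩
  have hσ_fin : ∀ n, sierSup μ s (U n) ≠ ⊤ := by
    intro n
    have : sierSup μ s (U n) ≤ 1/2 := iSup_le fun t' => t'.2.2.2
    exact (this.trans_lt (by norm_num)).ne
  have hcond : ∀ n, (∃ t', sierGood μ s (U n) t' ∧ sierSup μ s (U n) ≤ 2 * μ t') ∧ μ (U n) < 1/2 := by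
    intro n
    refine ⟨?_, hno n⟩
    have hσpos : 0 < sierSup μ s (U n) := lt_of_lt_of_le ht_pos (hσ n)
    have hhalf : sierSup μ s (U n) / 2 < sierSup μ s (U n) :=
      ENNReal.half_lt_self hσpos.ne' (hσ_fin n)
    rw [show sierSup μ s (U n) = ⨆ t' : {t' : Set R // sierGood μ s (U n) t'}, μ t'.1 from rfl]
      at hhalf
    obtain ⟨t', ht'⟩ := lt_iSup_iff.mp hhalf
    refine ⟨t', t'.2, ?_⟩
    have := mul_le_mul_right ht'.le 2
    rwa [ENNReal.mul_div_cancel two_ne_zero ENNReal.ofNat_ne_top] at this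
  have hgrow : ∀ n, μ (U n) + μ t / 2 ≤ μ (U (n+1)) := by
    intro n
    have hnext : U (n+1) = U n ∪ ((hcond n).1).choose := by
      show sierNext μ s (U n) = _
      unfold sierNext
      rw [dif_pos (hcond n)]
    obtain ⟨⟨hgsub, hgmeas, _⟩, hg2⟩ := ((hcond n).1).choose_spec
    have hdisj : Disjoint (U n) ((hcond n).1).choose :=
      Set.disjoint_right.2 fun x hx => (hgsub hx).2
    have hμt : μ t / 2 ≤ μ ((hcond n).1).choose := by
      have : μ t ≤ 2 * μ ((hcond n).1).choose := (hσ n).trans hg2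
      rw [ENNReal.div_le_iff_le_mul (Or.inl two_ne_zero) (Or.inl ENNReal.ofNat_ne_top)]
      rwa [mul_comm]
    rw [hnext, measure_union hdisj hgmeas]
    exact add_le_add_right hμt _
  have hlin : ∀ n : ℕ, (n : ℝ≥0∞) * (μ t / 2) ≤ μ (U n) := by
    intro n; induction n with
    | zero => simp
    | succ n ih =>
      calc ((n+1 : ℕ) : ℝ≥0∞) * (μ t / 2) = (n : ℝ≥0∞) * (μ t / 2) + μ t / 2 := by
            push_cast; ring
        _ ≤ μ (U n) + μ t / 2 := add_le_add_left ih _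
        _ ≤ μ (U (n+1)) := hgrow n
  have hx_pos : 0 < μ t / 2 := ENNReal.half_pos ht_pos.ne'
  have hx_fin : μ t / 2 ≠ ⊤ := by
    intro h
    exact (ht_lt.trans_le le_top).ne (by simpa using (ENNReal.div_eq_top.mp h))
  obtain ⟨n, hn⟩ := ENNReal.exists_nat_gt
    (ENNReal.div_lt_top (show (1/2:ℝ≥0∞) ≠ ⊤ by norm_num) hx_pos.ne').ne
  rw [ENNReal.div_lt_iff (Or.inl hx_pos.ne') (Or.inl hx_fin)] at hn
  exact absurd (hn.trans_le (hlin n)) (not_lt.2 (hno n).le)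

lemma lux_indicator_le (A : YoungFunction) {F : Set R} (hF : MeasurableSet F)
    (hμF : μ F ≤ 1) {c : ℝ≥0∞} (hct : c ≠ ⊤) (hA : A.toFun c ≤ 1) :
    luxNorm μ A (F.indicator fun _ => c.toReal) ≤ 1 := by
  apply sInf_le
  refine ⟨zero_lt_one, ?_⟩
  have heq : (fun x => A.toFun (ENNReal.ofReal |F.indicator (fun _ => c.toReal) x| / 1))
      = F.indicator fun _ => A.toFun c := by
    funext x
    by_cases hx : x ∈ F
    · rw [Set.indicator_of_mem hx, Set.indicator_of_mem hx, div_one,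
        abs_of_nonneg ENNReal.toReal_nonneg, ENNReal.ofReal_toReal hct]
    · rw [Set.indicator_of_notMem hx, Set.indicator_of_notMem hx, div_one, abs_zero,
        ENNReal.ofReal_zero, A.map_zero]
  rw [heq, lintegral_indicator hF, setLIntegral_const]
  exact mul_le_one' hA hμF

lemma rearr_indicator_ge {F : Set R} {c : ℝ≥0∞} (hct : c ≠ ⊤)
    {t : ℝ≥0∞} (ht : t < μ F) :
    c ≤ rearr μ (F.indicator fun _ => c.toReal) t := by
  apply le_sInf
  intro lam hlam
  by_contra hc
  push_neg at hc
  have hsub : F ⊆ {x | lam < ENNReal.ofReal |F.indicator (fun _ => c.toReal) x|} := by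
    intro x hx
    simp only [Set.mem_setOf_eq, Set.indicator_of_mem hx,
      abs_of_nonneg ENNReal.toReal_nonneg, ENNReal.ofReal_toReal hct]
    exact hc
  have : μ F ≤ distFn μ (F.indicator fun _ => c.toReal) lam := measure_mono hsub
  exact absurd (this.trans hlam) (not_le.2 ht)

/-- Explicit positive lower bound for the Lorentz norm of `c·χ_F` when `μ F ≥ 1/2`. -/
def lorentzDelta (p q c : ℝ≥0∞) : ℝ≥0∞ :=
  if q = ⊤ then ENNReal.ofReal (1/4) ^ (p⁻¹).toReal * c
  else ((ENNReal.ofReal (1/8) ^ (p⁻¹).toReal * c) ^ q.toReal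
    * ENNReal.ofReal (1/8)) ^ (q⁻¹).toReal

lemma ofReal_quarter_lt_half : ENNReal.ofReal (1/4) < 1/2 := by
  rw [show ((1:ℝ≥0∞)/2) = ENNReal.ofReal (1/2) by
    rw [ENNReal.ofReal_div_of_pos (by norm_num), ENNReal.ofReal_one, ENNReal.ofReal_ofNat]]
  exact (ENNReal.ofReal_lt_ofReal_iff_of_nonneg (by norm_num)).2 (by norm_num)

lemma lorentzDelta_pos {p q c : ℝ≥0∞} (hc0 : 0 < c) (hct : c ≠ ⊤) :
    0 < lorentzDelta p q c ∧ lorentzDelta p q c ≠ ⊤ := by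
  have h8 : (0:ℝ≥0∞) < ENNReal.ofReal (1/8) ^ (p⁻¹).toReal :=
    ENNReal.rpow_pos (by norm_num [ENNReal.ofReal_pos]) ENNReal.ofReal_ne_top
  have h8t : ENNReal.ofReal (1/8) ^ (p⁻¹).toReal ≠ ⊤ :=
    (ENNReal.rpow_lt_top_of_nonneg ENNReal.toReal_nonneg ENNReal.ofReal_ne_top).ne
  have h4 : (0:ℝ≥0∞) < ENNReal.ofReal (1/4) ^ (p⁻¹).toReal :=
    ENNReal.rpow_pos (by norm_num [ENNReal.ofReal_pos]) ENNReal.ofReal_ne_top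
  have h4t : ENNReal.ofReal (1/4) ^ (p⁻¹).toReal ≠ ⊤ :=
    (ENNReal.rpow_lt_top_of_nonneg ENNReal.toReal_nonneg ENNReal.ofReal_ne_top).ne
  unfold lorentzDelta
  split
  · exact ⟨ENNReal.mul_pos h4.ne' hc0.ne', ENNReal.mul_ne_top h4t hct⟩
  · have hbase0 : (0:ℝ≥0∞) < (ENNReal.ofReal (1/8) ^ (p⁻¹).toReal * c) ^ q.toReal
        * ENNReal.ofReal (1/8) := by
      apply ENNReal.mul_pos _ (by norm_num [ENNReal.ofReal_pos] : ((0:ℝ≥0∞) <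
        ENNReal.ofReal (1/8))).ne'
      exact (ENNReal.rpow_pos (ENNReal.mul_pos h8.ne' hc0.ne')
        (ENNReal.mul_ne_top h8t hct)).ne'
    have hbaset : (ENNReal.ofReal (1/8) ^ (p⁻¹).toReal * c) ^ q.toReal
        * ENNReal.ofReal (1/8) ≠ ⊤ := by
      apply ENNReal.mul_ne_top _ ENNReal.ofReal_ne_top
      exact (ENNReal.rpow_lt_top_of_nonneg ENNReal.toReal_nonneg
        (ENNReal.mul_ne_top h8t hct)).ne
    exact ⟨ENNReal.rpow_pos hbase0 hbaset,
      (ENNReal.rpow_lt_top_of_nonneg ENNReal.toReal_nonneg hbaset).ne⟩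

lemma lorentz_lower (p q : ℝ≥0∞) {F : Set R} {c : ℝ≥0∞} (hct : c ≠ ⊤)
    (hF2 : (1:ℝ≥0∞)/2 ≤ μ F) :
    lorentzDelta p q c ≤ lorentzNorm μ p q (F.indicator fun _ => c.toReal) := by
  set f := F.indicator fun _ => c.toReal with hf
  have hrearr : ∀ t : ℝ, 0 < t → t ≤ 1/4 → c ≤ rearr μ f (ENNReal.ofReal t) := by
    intro t ht0 ht4
    apply rearr_indicator_ge hct
    calc ENNReal.ofReal t ≤ ENNReal.ofReal (1/4) := ENNReal.ofReal_le_ofReal ht4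
      _ < 1/2 := ofReal_quarter_lt_half
      _ ≤ μ F := hF2
  unfold lorentzNorm lorentzDelta
  split
  · -- q = ⊤
    refine le_trans ?_ (le_iSup _ (⟨1/4, Set.mem_Ioi.mpr (by norm_num)⟩ : Set.Ioi (0:ℝ)))
    exact mul_le_mul_right (hrearr (1/4) (by norm_num) le_rfl) _
  · -- q finite
    set C := (ENNReal.ofReal (1/8) ^ (p⁻¹).toReal * c) ^ q.toReal with hC
    have hpt : ∀ t : ℝ, (Set.Ioc (1/8:ℝ) (1/4)).indicator (fun _ => C) t ≤
        (ENNReal.ofReal t ^ (p⁻¹).toReal * rearr μ f (ENNReal.ofReal t)) ^ q.toReal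
          / ENNReal.ofReal t := by
      intro t
      by_cases ht : t ∈ Set.Ioc (1/8:ℝ) (1/4)
      · rw [Set.indicator_of_mem ht]
        have h1 : C ≤ (ENNReal.ofReal t ^ (p⁻¹).toReal
            * rearr μ f (ENNReal.ofReal t)) ^ q.toReal := by
          apply ENNReal.rpow_le_rpow _ ENNReal.toReal_nonneg
          exact mul_le_mul'
            (ENNReal.rpow_le_rpow (ENNReal.ofReal_le_ofReal ht.1.le) ENNReal.toReal_nonneg)
            (hrearr t (lt_trans (by norm_num) ht.1) ht.2)
        refine h1.trans ?_
        have hd1 : ENNReal.ofReal t ≤ 1 := by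
          rw [show (1:ℝ≥0∞) = ENNReal.ofReal 1 from ENNReal.ofReal_one.symm]
          exact ENNReal.ofReal_le_ofReal (ht.2.trans (by norm_num))
        calc (ENNReal.ofReal t ^ (p⁻¹).toReal * rearr μ f (ENNReal.ofReal t)) ^ q.toReal
            = (ENNReal.ofReal t ^ (p⁻¹).toReal * rearr μ f (ENNReal.ofReal t)) ^ q.toReal / 1 :=
              (div_one _).symm
          _ ≤ _ := ENNReal.div_le_div_left hd1 _
      · rw [Set.indicator_of_notMem ht]
        exact zero_le
    have hint : C * ENNReal.ofReal (1/8) ≤ ∫⁻ t in Set.Ioi (0:ℝ),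
        (ENNReal.ofReal t ^ (p⁻¹).toReal * rearr μ f (ENNReal.ofReal t)) ^ q.toReal
          / ENNReal.ofReal t := by
      have h1 : ∫⁻ t in Set.Ioi (0:ℝ), (Set.Ioc (1/8:ℝ) (1/4)).indicator (fun _ => C) t
          = C * ENNReal.ofReal (1/8) := by
        have hss : Set.Ioc (1/8:ℝ) (1/4) ∩ Set.Ioi (0:ℝ) = Set.Ioc (1/8:ℝ) (1/4) :=
          Set.inter_eq_self_of_subset_left (fun x hx => lt_trans (by norm_num) hx.1)
        rw [lintegral_indicator measurableSet_Ioc, setLIntegral_const,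
          Measure.restrict_apply measurableSet_Ioc, hss, Real.volume_Ioc]
        norm_num
      rw [← h1]
      exact lintegral_mono fun t => hpt t
    exact ENNReal.rpow_le_rpow hint ENNReal.toReal_nonneg

end Helpers

/-- On a non-atomic σ-finite measure space of infinite measure,
no almost-compact embedding `L^A ↪* L^{p,q}` can hold. -/
theorem no_almost_compact_embedding_of_infinite_measure
    {R : Type*} [MeasurableSpace R] (μ : Measure R) [SigmaFinite μ]
    (hna : NonAtomic μ) (hinf : μ Set.univ = ⊤)
    (A : YoungFunction) (p q : ℝ≥0∞) (hp : 0 < p) (hq : 0 < q) :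
    ¬ AlmostCompactEmbedding μ (luxNorm μ A) (lorentzNorm μ p q) := by
  classical
  -- Step 1: a small positive point of A
  obtain ⟨t0, hAt0, ht0mem⟩ : ∃ t0 : ℝ≥0∞, A.toFun t0 < 1 ∧ t0 ∈ Set.Ioi (0:ℝ≥0∞) := by
    have hev : ∀ᶠ t in nhdsWithin (0:ℝ≥0∞) (Set.Ioi 0), A.toFun t < 1 :=
      A.tendsto_zero.eventually_lt_const (by norm_num)
    exact (hev.and eventually_mem_nhdsWithin).exists
  have ht0pos : 0 < t0 := ht0mem
  have ht0top : t0 ≠ ⊤ := by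
    intro h
    rw [h, A.map_top] at hAt0
    exact absurd hAt0 (by simp)
  -- Step 2: spanning sets have unbounded measure
  have hsup : ⨆ n, μ (spanningSets μ n) = ⊤ := by
    rw [← (monotone_spanningSets μ).directed_le.measure_iUnion, iUnion_spanningSets, hinf]
  have hex : ∀ m : ℕ, ∃ j : ℕ, m < j ∧ μ (spanningSets μ m) + 1 ≤ μ (spanningSets μ j) := by
    intro m
    have hfin : μ (spanningSets μ m) + 1 ≠ ⊤ :=
      ENNReal.add_ne_top.2 ⟨(measure_spanningSets_lt_top μ m).ne, one_ne_top⟩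
    obtain ⟨j₀, hj₀⟩ := lt_iSup_iff.mp (show μ (spanningSets μ m) + 1 < ⨆ n,
      μ (spanningSets μ n) from hsup ▸ hfin.lt_top)
    exact ⟨max j₀ (m+1), lt_of_lt_of_le (Nat.lt_succ_self m) (le_max_right _ _),
      hj₀.le.trans (measure_mono (monotone_spanningSets μ (le_max_left _ _)))⟩
  set k : ℕ → ℕ := fun n => Nat.rec 0 (fun m _ih => (hex _ih).choose) n with hk
  have hkstep : ∀ n, k n < k (n+1) ∧ μ (spanningSets μ (k n)) + 1
      ≤ μ (spanningSets μ (k (n+1))) := fun n => (hex (k n)).choose_spec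
  have hkmono : StrictMono k := strictMono_nat_of_lt_succ fun n => (hkstep n).1
  -- Step 3: disjoint chunks of measure at least 1
  set E : ℕ → Set R := fun n => spanningSets μ (k (n+1)) \ spanningSets μ (k n) with hE
  have hE_meas : ∀ n, MeasurableSet (E n) :=
    fun n => (measurableSet_spanningSets μ _).diff (measurableSet_spanningSets μ _)
  have hE_fin : ∀ n, μ (E n) ≠ ⊤ := fun n =>
    ((measure_mono Set.diff_subset).trans_lt (measure_spanningSets_lt_top μ _)).ne
  have hE1 : ∀ n, 1 ≤ μ (E n) := by
    intro n
    have hd : μ (E n) = μ (spanningSets μ (k (n+1))) - μ (spanningSets μ (k n)) :=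
      measure_diff (monotone_spanningSets μ (hkstep n).1.le)
        (measurableSet_spanningSets μ _).nullMeasurableSet (measure_spanningSets_lt_top μ _).ne
    rw [hd]
    have := tsub_le_tsub_right (hkstep n).2 (μ (spanningSets μ (k n)))
    rwa [ENNReal.add_sub_cancel_left (measure_spanningSets_lt_top μ _).ne] at this
  -- Step 4: subsets of measure in [1/2, 1]
  have hFex : ∀ n, ∃ t, t ⊆ E n ∧ MeasurableSet t ∧ 1/2 ≤ μ t ∧ μ t ≤ 1 :=
    fun n => sier_exists hna (hE_meas n) (hE1 n) (hE_fin n)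
  set F : ℕ → Set R := fun n => (hFex n).choose with hF
  have hF_sub : ∀ n, F n ⊆ E n := fun n => (hFex n).choose_spec.1
  have hF_meas : ∀ n, MeasurableSet (F n) := fun n => (hFex n).choose_spec.2.1
  have hF_half : ∀ n, 1/2 ≤ μ (F n) := fun n => (hFex n).choose_spec.2.2.1
  have hF_one : ∀ n, μ (F n) ≤ 1 := fun n => (hFex n).choose_spec.2.2.2
  have hF_sep : ∀ m n, m < n → ∀ x, x ∈ F m → x ∉ F n := by
    intro m n hmn x hxm hxn
    have h1 : x ∈ spanningSets μ (k n) :=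
      monotone_spanningSets μ (hkmono.monotone hmn) ((hF_sub m hxm).1)
    exact ((hF_sub n hxn).2) h1
  -- Step 5: indicators tend to zero pointwise
  have hF_tend : ∀ x : R, Filter.Tendsto (fun n => (F n).indicator (fun _ => (1:ℝ)) x)
      Filter.atTop (nhds 0) := by
    intro x
    apply Filter.Tendsto.congr' _ tendsto_const_nhds
    rw [Filter.eventuallyEq_iff_exists_mem]
    by_cases hx : ∃ m, x ∈ F m
    · obtain ⟨m, hm⟩ := hx
      refine ⟨{n | m + 1 ≤ n}, Filter.mem_atTop _, fun n hn => ?_⟩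
      have : x ∉ F n := fun hxn => hF_sep m n (Nat.lt_of_succ_le hn) x hm hxn
      simp [Set.indicator_of_notMem this]
    · refine ⟨Set.univ, Filter.univ_mem, fun n _ => ?_⟩
      push_neg at hx
      simp [Set.indicator_of_notMem (hx n)]
  -- Step 6: the test functions
  set c : ℝ := t0.toReal with hc
  set f : ℕ → R → ℝ := fun n => (F n).indicator (fun _ => c) with hfdef
  have hf_meas : ∀ n, Measurable (f n) := fun n => (measurable_const.indicator (hF_meas n))
  have hf_lux : ∀ n, luxNorm μ A (f n) ≤ 1 :=
    fun n => lux_indicator_le A (hF_meas n) (hF_one n) ht0top hAt0.le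
  -- Step 7: contradiction
  rintro ⟨-, hACE⟩
  have htend := hACE F hF_meas (Filter.Eventually.of_forall hF_tend)
  obtain ⟨hδpos, hδtop⟩ := lorentzDelta_pos (p := p) (q := q) ht0pos ht0top
  have hub : ∀ n, lorentzDelta p q t0 ≤
      ⨆ g : {g : R → ℝ // Measurable g ∧ luxNorm μ A g ≤ 1},
        lorentzNorm μ p q ((F n).indicator g.1) := by
    intro n
    refine le_trans ?_ (le_iSup _ (⟨f n, hf_meas n, hf_lux n⟩ :
      {g : R → ℝ // Measurable g ∧ luxNorm μ A g ≤ 1}))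
    have hind : (F n).indicator (f n) = f n := by
      rw [hfdef]
      simp only [Set.indicator_indicator, Set.inter_self]
    rw [hind]
    exact lorentz_lower p q ht0top (hF_half n)
  rw [ENNReal.tendsto_nhds_zero] at htend
  obtain ⟨n, hn⟩ := (htend (lorentzDelta p q t0 / 2)
    (ENNReal.half_pos hδpos.ne')).exists
  exact absurd ((hub n).trans hn)
    (not_le.2 (ENNReal.half_lt_self hδpos.ne' hδtop))
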